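/- The code 𝒮₃ := {{1,2,3},{1,4},{2,4},{3,4},{1},{2},{3},{4},∅} has a closed convex realization in ℝ² and an open convex realization in ℝ³; that is, there exist closed convex sets X₁,…,X₄ ⊆ ℝ² with code(X₁,…,X₄) = 𝒮₃, and open convex sets U₁,…,U₄ ⊆ ℝ³ with code(U₁,…,U₄) = 𝒮₃. -/

import Mathlib

/-- The code of a family of sets. -/
def code {X : Type*} {n : ℕ} (U : Fin n → Set X) : Set (Finset (Fin n)) :=
  {σ | ∃ p : X, ∀ i, p ∈ U i ↔ i ∈ σ}

/-- The code `𝒮₃`, on neurons `0,…,3` (representing `1,…,4`). -/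
def S3 : Set (Finset (Fin 4)) :=
  {{0,1,2}, {0,3}, {1,3}, {2,3}, {0}, {1}, {2}, {3}, ∅}

/-- Convex combination of strict inequalities. -/
private lemma cmb {a b x y X Y : ℝ} (ha : 0 ≤ a) (hb : 0 ≤ b) (hab : a + b = 1)
    (hx : x < X) (hy : y < Y) : a*x + b*y < a*X + b*Y := by
  rcases lt_or_eq_of_le ha with h | h
  · have h1 : a*x < a*X := mul_lt_mul_of_pos_left hx h
    have h2 : b*y ≤ b*Y := mul_le_mul_of_nonneg_left hy.le hb
    linarith
  · have hb1 : b = 1 := by linarith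
    have ha0 : a = 0 := h.symm
    subst ha0; subst hb1; simpa using hy
private def Xc : Fin 4 → Set (Fin 2 → ℝ) :=
  ![{p | p 1 = -p 0 ∧ 0 ≤ p 1 ∧ p 1 ≤ 1},
    {p | p 0 = 0 ∧ 0 ≤ p 1 ∧ p 1 ≤ 1},
    {p | p 1 = p 0 ∧ 0 ≤ p 1 ∧ p 1 ≤ 1},
    {p | p 1 = 1 ∧ -1 ≤ p 0 ∧ p 0 ≤ 1}]

private lemma Xc_mem (p : Fin 2 → ℝ) :
    (p ∈ Xc 0 ↔ (p 1 = -p 0 ∧ 0 ≤ p 1 ∧ p 1 ≤ 1)) ∧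
    (p ∈ Xc 1 ↔ (p 0 = 0 ∧ 0 ≤ p 1 ∧ p 1 ≤ 1)) ∧
    (p ∈ Xc 2 ↔ (p 1 = p 0 ∧ 0 ≤ p 1 ∧ p 1 ≤ 1)) ∧
    (p ∈ Xc 3 ↔ (p 1 = 1 ∧ -1 ≤ p 0 ∧ p 0 ≤ 1)) := by
  simp [Xc]

private lemma code_Xc : code Xc = S3 := by
  ext σ
  constructor
  · rintro ⟨p, hp⟩
    obtain ⟨e0, e1, e2, e3⟩ := Xc_mem p
    have h0 := (hp 0).symm.trans e0
    have h1 := (hp 1).symm.trans e1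
    have h2 := (hp 2).symm.trans e2
    have h3 := (hp 3).symm.trans e3
    by_cases m0 : (0 : Fin 4) ∈ σ <;> by_cases m1 : (1 : Fin 4) ∈ σ <;>
      by_cases m2 : (2 : Fin 4) ∈ σ <;> by_cases m3 : (3 : Fin 4) ∈ σ
    -- 1 TTTT
    · exfalso
      obtain ⟨a0, a1, a2⟩ := h0.mp m0
      obtain ⟨b0, b1, b2⟩ := h1.mp m1
      obtain ⟨c0, c1, c2⟩ := h3.mp m3
      linarith
    -- 2 TTTF : {0,1,2}
    · have hσ : σ = {0,1,2} := Finset.ext fun i => by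
        fin_cases i <;> simp [m0, m1, m2, m3]
      rw [hσ]; simp [S3]
    -- 3 TTFT
    · exfalso
      obtain ⟨a0, a1, a2⟩ := h0.mp m0
      obtain ⟨b0, b1, b2⟩ := h1.mp m1
      exact m2 (h2.mpr ⟨by linarith, by linarith, by linarith⟩)
    -- 4 TTFF
    · exfalso
      obtain ⟨a0, a1, a2⟩ := h0.mp m0
      obtain ⟨b0, b1, b2⟩ := h1.mp m1
      exact m2 (h2.mpr ⟨by linarith, by linarith, by linarith⟩)
    -- 5 TFTT
    · exfalso
      obtain ⟨a0, a1, a2⟩ := h0.mp m0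
      obtain ⟨c0, c1, c2⟩ := h2.mp m2
      exact m1 (h1.mpr ⟨by linarith, by linarith, by linarith⟩)
    -- 6 TFTF
    · exfalso
      obtain ⟨a0, a1, a2⟩ := h0.mp m0
      obtain ⟨c0, c1, c2⟩ := h2.mp m2
      exact m1 (h1.mpr ⟨by linarith, by linarith, by linarith⟩)
    -- 7 TFFT : {0,3}
    · have hσ : σ = {0,3} := Finset.ext fun i => by
        fin_cases i <;> simp [m0, m1, m2, m3]
      rw [hσ]; simp [S3]
    -- 8 TFFF : {0}
    · have hσ : σ = {0} := Finset.ext fun i => by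
        fin_cases i <;> simp [m0, m1, m2, m3]
      rw [hσ]; simp [S3]
    -- 9 FTTT
    · exfalso
      obtain ⟨b0, b1, b2⟩ := h1.mp m1
      obtain ⟨c0, c1, c2⟩ := h2.mp m2
      exact m0 (h0.mpr ⟨by linarith, by linarith, by linarith⟩)
    -- 10 FTTF
    · exfalso
      obtain ⟨b0, b1, b2⟩ := h1.mp m1
      obtain ⟨c0, c1, c2⟩ := h2.mp m2
      exact m0 (h0.mpr ⟨by linarith, by linarith, by linarith⟩)
    -- 11 FTFT : {1,3}
    · have hσ : σ = {1,3} := Finset.ext fun i => by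
        fin_cases i <;> simp [m0, m1, m2, m3]
      rw [hσ]; simp [S3]
    -- 12 FTFF : {1}
    · have hσ : σ = {1} := Finset.ext fun i => by
        fin_cases i <;> simp [m0, m1, m2, m3]
      rw [hσ]; simp [S3]
    -- 13 FFTT : {2,3}
    · have hσ : σ = {2,3} := Finset.ext fun i => by
        fin_cases i <;> simp [m0, m1, m2, m3]
      rw [hσ]; simp [S3]
    -- 14 FFTF : {2}
    · have hσ : σ = {2} := Finset.ext fun i => by
        fin_cases i <;> simp [m0, m1, m2, m3]
      rw [hσ]; simp [S3]
    -- 15 FFFT : {3}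
    · have hσ : σ = {3} := Finset.ext fun i => by
        fin_cases i <;> simp [m0, m1, m2, m3]
      rw [hσ]; simp [S3]
    -- 16 FFFF : ∅
    · have hσ : σ = ∅ := Finset.ext fun i => by
        fin_cases i <;> simp [m0, m1, m2, m3]
      rw [hσ]; simp [S3]
  · intro hσ
    simp only [S3, Set.mem_insert_iff, Set.mem_singleton_iff] at hσ
    rcases hσ with h | h | h | h | h | h | h | h | h <;> subst h
    · exact ⟨![0, 0], fun i => by fin_cases i <;> norm_num [Xc] <;> decide⟩
    · exact ⟨![-1, 1], fun i => by fin_cases i <;> norm_num [Xc] <;> decide⟩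
    · exact ⟨![0, 1], fun i => by fin_cases i <;> norm_num [Xc] <;> decide⟩
    · exact ⟨![1, 1], fun i => by fin_cases i <;> norm_num [Xc] <;> decide⟩
    · exact ⟨![-1/2, 1/2], fun i => by fin_cases i <;> norm_num [Xc] <;> decide⟩
    · exact ⟨![0, 1/2], fun i => by fin_cases i <;> norm_num [Xc] <;> decide⟩
    · exact ⟨![1/2, 1/2], fun i => by fin_cases i <;> norm_num [Xc] <;> decide⟩
    · exact ⟨![1/2, 1], fun i => by fin_cases i <;> norm_num [Xc] <;> decide⟩
    · exact ⟨![5, 5], fun i => by fin_cases i <;> norm_num [Xc] <;> decide⟩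

private def Uo : Fin 4 → Set (Fin 3 → ℝ) :=
  ![{p | 0 < p 0 ∧ 0 < p 1 ∧ p 0 + p 1 < 3 ∧ p 2 < 2*p 1 - 2*p 0 - 1},
    {p | p 0 + p 1 < 1 ∧ 0 < p 1 ∧ -2 < p 0 ∧ p 2 < 2*p 1 - 2*p 0 - 1},
    {p | 0 < p 0 ∧ p 0 + p 1 < 1 ∧ -2 < p 1 ∧ p 2 < 3 - 2*p 1},
    {p | 1 < p 2}]

private lemma Uo_mem (p : Fin 3 → ℝ) :
    (p ∈ Uo 0 ↔ (0 < p 0 ∧ 0 < p 1 ∧ p 0 + p 1 < 3 ∧ p 2 < 2*p 1 - 2*p 0 - 1)) ∧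
    (p ∈ Uo 1 ↔ (p 0 + p 1 < 1 ∧ 0 < p 1 ∧ -2 < p 0 ∧ p 2 < 2*p 1 - 2*p 0 - 1)) ∧
    (p ∈ Uo 2 ↔ (0 < p 0 ∧ p 0 + p 1 < 1 ∧ -2 < p 1 ∧ p 2 < 3 - 2*p 1)) ∧
    (p ∈ Uo 3 ↔ 1 < p 2) := by
  simp [Uo]

private lemma code_Uo : code Uo = S3 := by
  ext σ
  constructor
  · rintro ⟨p, hp⟩
    obtain ⟨e0, e1, e2, e3⟩ := Uo_mem p
    have h0 := (hp 0).symm.trans e0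
    have h1 := (hp 1).symm.trans e1
    have h2 := (hp 2).symm.trans e2
    have h3 := (hp 3).symm.trans e3
    by_cases m0 : (0 : Fin 4) ∈ σ <;> by_cases m1 : (1 : Fin 4) ∈ σ <;>
      by_cases m2 : (2 : Fin 4) ∈ σ <;> by_cases m3 : (3 : Fin 4) ∈ σ
    -- 1 TTTT
    · exfalso
      obtain ⟨a0, a1, a2, a3⟩ := h0.mp m0
      obtain ⟨b0, b1, b2, b3⟩ := h1.mp m1
      have c := h3.mp m3
      linarith
    -- 2 TTTF : {0,1,2}
    · have hσ : σ = {0,1,2} := Finset.ext fun i => by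
        fin_cases i <;> simp [m0, m1, m2, m3]
      rw [hσ]; simp [S3]
    -- 3 TTFT
    · exfalso
      obtain ⟨a0, a1, a2, a3⟩ := h0.mp m0
      obtain ⟨b0, b1, b2, b3⟩ := h1.mp m1
      exact m2 (h2.mpr ⟨by linarith, by linarith, by linarith, by linarith⟩)
    -- 4 TTFF
    · exfalso
      obtain ⟨a0, a1, a2, a3⟩ := h0.mp m0
      obtain ⟨b0, b1, b2, b3⟩ := h1.mp m1
      exact m2 (h2.mpr ⟨by linarith, by linarith, by linarith, by linarith⟩)
    -- 5 TFTT
    · exfalso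
      obtain ⟨a0, a1, a2, a3⟩ := h0.mp m0
      obtain ⟨c0, c1, c2, c3⟩ := h2.mp m2
      exact m1 (h1.mpr ⟨by linarith, by linarith, by linarith, by linarith⟩)
    -- 6 TFTF
    · exfalso
      obtain ⟨a0, a1, a2, a3⟩ := h0.mp m0
      obtain ⟨c0, c1, c2, c3⟩ := h2.mp m2
      exact m1 (h1.mpr ⟨by linarith, by linarith, by linarith, by linarith⟩)
    -- 7 TFFT : {0,3}
    · have hσ : σ = {0,3} := Finset.ext fun i => by
        fin_cases i <;> simp [m0, m1, m2, m3]
      rw [hσ]; simp [S3]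
    -- 8 TFFF : {0}
    · have hσ : σ = {0} := Finset.ext fun i => by
        fin_cases i <;> simp [m0, m1, m2, m3]
      rw [hσ]; simp [S3]
    -- 9 FTTT
    · exfalso
      obtain ⟨b0, b1, b2, b3⟩ := h1.mp m1
      obtain ⟨c0, c1, c2, c3⟩ := h2.mp m2
      exact m0 (h0.mpr ⟨by linarith, by linarith, by linarith, by linarith⟩)
    -- 10 FTTF
    · exfalso
      obtain ⟨b0, b1, b2, b3⟩ := h1.mp m1
      obtain ⟨c0, c1, c2, c3⟩ := h2.mp m2
      exact m0 (h0.mpr ⟨by linarith, by linarith, by linarith, by linarith⟩)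
    -- 11 FTFT : {1,3}
    · have hσ : σ = {1,3} := Finset.ext fun i => by
        fin_cases i <;> simp [m0, m1, m2, m3]
      rw [hσ]; simp [S3]
    -- 12 FTFF : {1}
    · have hσ : σ = {1} := Finset.ext fun i => by
        fin_cases i <;> simp [m0, m1, m2, m3]
      rw [hσ]; simp [S3]
    -- 13 FFTT : {2,3}
    · have hσ : σ = {2,3} := Finset.ext fun i => by
        fin_cases i <;> simp [m0, m1, m2, m3]
      rw [hσ]; simp [S3]
    -- 14 FFTF : {2}
    · have hσ : σ = {2} := Finset.ext fun i => by
        fin_cases i <;> simp [m0, m1, m2, m3]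
      rw [hσ]; simp [S3]
    -- 15 FFFT : {3}
    · have hσ : σ = {3} := Finset.ext fun i => by
        fin_cases i <;> simp [m0, m1, m2, m3]
      rw [hσ]; simp [S3]
    -- 16 FFFF : ∅
    · have hσ : σ = ∅ := Finset.ext fun i => by
        fin_cases i <;> simp [m0, m1, m2, m3]
      rw [hσ]; simp [S3]
  · intro hσ
    simp only [S3, Set.mem_insert_iff, Set.mem_singleton_iff] at hσ
    rcases hσ with h | h | h | h | h | h | h | h | h <;> subst h
    · exact ⟨![1/4, 1/4, -10], fun i => by fin_cases i <;> norm_num [Uo, Matrix.cons_val_two] <;> decide⟩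
    · exact ⟨![1/10, 5/2, 2], fun i => by fin_cases i <;> norm_num [Uo, Matrix.cons_val_two] <;> decide⟩
    · exact ⟨![-3/2, 1/2, 2], fun i => by fin_cases i <;> norm_num [Uo, Matrix.cons_val_two] <;> decide⟩
    · exact ⟨![1/2, -3/2, 2], fun i => by fin_cases i <;> norm_num [Uo, Matrix.cons_val_two] <;> decide⟩
    · exact ⟨![1/10, 5/2, 0], fun i => by fin_cases i <;> norm_num [Uo, Matrix.cons_val_two] <;> decide⟩
    · exact ⟨![-3/2, 1/2, 0], fun i => by fin_cases i <;> norm_num [Uo, Matrix.cons_val_two] <;> decide⟩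
    · exact ⟨![1/2, -3/2, 0], fun i => by fin_cases i <;> norm_num [Uo, Matrix.cons_val_two] <;> decide⟩
    · exact ⟨![10, 10, 2], fun i => by fin_cases i <;> norm_num [Uo, Matrix.cons_val_two] <;> decide⟩
    · exact ⟨![10, 10, 0], fun i => by fin_cases i <;> norm_num [Uo, Matrix.cons_val_two] <;> decide⟩

private lemma Xc_closed_convex : ∀ i, IsClosed (Xc i) ∧ Convex ℝ (Xc i) := by
  intro i
  fin_cases i <;> refine ⟨?_, ?_⟩
  · exact (isClosed_eq (continuous_apply 1) (continuous_apply 0).neg).inter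
      ((isClosed_le continuous_const (continuous_apply 1)).inter
        (isClosed_le (continuous_apply 1) continuous_const))
  · rintro u ⟨hu1, hu2, hu3⟩ v ⟨hv1, hv2, hv3⟩ a b ha hb hab
    refine ⟨?_, ?_, ?_⟩ <;> simp only [Pi.add_apply, Pi.smul_apply, smul_eq_mul]
    · linear_combination a*hu1 + b*hv1
    · nlinarith [mul_nonneg ha hu2, mul_nonneg hb hv2]
    · nlinarith [mul_le_mul_of_nonneg_left hu3 ha, mul_le_mul_of_nonneg_left hv3 hb]
  · exact (isClosed_eq (continuous_apply 0) continuous_const).inter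
      ((isClosed_le continuous_const (continuous_apply 1)).inter
        (isClosed_le (continuous_apply 1) continuous_const))
  · rintro u ⟨hu1, hu2, hu3⟩ v ⟨hv1, hv2, hv3⟩ a b ha hb hab
    refine ⟨?_, ?_, ?_⟩ <;> simp only [Pi.add_apply, Pi.smul_apply, smul_eq_mul]
    · linear_combination a*hu1 + b*hv1
    · nlinarith [mul_nonneg ha hu2, mul_nonneg hb hv2]
    · nlinarith [mul_le_mul_of_nonneg_left hu3 ha, mul_le_mul_of_nonneg_left hv3 hb]
  · exact (isClosed_eq (continuous_apply 1) (continuous_apply 0)).inter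
      ((isClosed_le continuous_const (continuous_apply 1)).inter
        (isClosed_le (continuous_apply 1) continuous_const))
  · rintro u ⟨hu1, hu2, hu3⟩ v ⟨hv1, hv2, hv3⟩ a b ha hb hab
    refine ⟨?_, ?_, ?_⟩ <;> simp only [Pi.add_apply, Pi.smul_apply, smul_eq_mul]
    · linear_combination a*hu1 + b*hv1
    · nlinarith [mul_nonneg ha hu2, mul_nonneg hb hv2]
    · nlinarith [mul_le_mul_of_nonneg_left hu3 ha, mul_le_mul_of_nonneg_left hv3 hb]
  · exact (isClosed_eq (continuous_apply 1) continuous_const).inter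
      ((isClosed_le continuous_const (continuous_apply 0)).inter
        (isClosed_le (continuous_apply 0) continuous_const))
  · rintro u ⟨hu1, hu2, hu3⟩ v ⟨hv1, hv2, hv3⟩ a b ha hb hab
    refine ⟨?_, ?_, ?_⟩ <;> simp only [Pi.add_apply, Pi.smul_apply, smul_eq_mul]
    · linear_combination a*hu1 + b*hv1 + hab
    · nlinarith [mul_le_mul_of_nonneg_left hu2 ha, mul_le_mul_of_nonneg_left hv2 hb]
    · nlinarith [mul_le_mul_of_nonneg_left hu3 ha, mul_le_mul_of_nonneg_left hv3 hb]

private lemma Uo_open_convex : ∀ i, IsOpen (Uo i) ∧ Convex ℝ (Uo i) := by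
  intro i
  fin_cases i <;> refine ⟨?_, ?_⟩
  · exact (isOpen_lt continuous_const (continuous_apply 0)).inter
      ((isOpen_lt continuous_const (continuous_apply 1)).inter
        ((isOpen_lt ((continuous_apply 0).add (continuous_apply 1)) continuous_const).inter
          (isOpen_lt (continuous_apply 2)
            (((continuous_const.mul (continuous_apply 1)).sub
              (continuous_const.mul (continuous_apply 0))).sub continuous_const))))
  · rintro u ⟨h1, h2, h3, h4⟩ v ⟨g1, g2, g3, g4⟩ a b ha hb hab
    refine ⟨?_, ?_, ?_, ?_⟩ <;> simp only [Pi.add_apply, Pi.smul_apply, smul_eq_mul]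
    · linarith [cmb ha hb hab h1 g1]
    · linarith [cmb ha hb hab h2 g2]
    · linarith [cmb ha hb hab h3 g3]
    · linarith [cmb ha hb hab h4 g4]
  · exact (isOpen_lt ((continuous_apply 0).add (continuous_apply 1)) continuous_const).inter
      ((isOpen_lt continuous_const (continuous_apply 1)).inter
        ((isOpen_lt continuous_const (continuous_apply 0)).inter
          (isOpen_lt (continuous_apply 2)
            (((continuous_const.mul (continuous_apply 1)).sub
              (continuous_const.mul (continuous_apply 0))).sub continuous_const))))
  · rintro u ⟨h1, h2, h3, h4⟩ v ⟨g1, g2, g3, g4⟩ a b ha hb hab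
    refine ⟨?_, ?_, ?_, ?_⟩ <;> simp only [Pi.add_apply, Pi.smul_apply, smul_eq_mul]
    · linarith [cmb ha hb hab h1 g1]
    · linarith [cmb ha hb hab h2 g2]
    · linarith [cmb ha hb hab h3 g3]
    · linarith [cmb ha hb hab h4 g4]
  · exact (isOpen_lt continuous_const (continuous_apply 0)).inter
      ((isOpen_lt ((continuous_apply 0).add (continuous_apply 1)) continuous_const).inter
        ((isOpen_lt continuous_const (continuous_apply 1)).inter
          (isOpen_lt (continuous_apply 2)
            (continuous_const.sub (continuous_const.mul (continuous_apply 1))))))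
  · rintro u ⟨h1, h2, h3, h4⟩ v ⟨g1, g2, g3, g4⟩ a b ha hb hab
    refine ⟨?_, ?_, ?_, ?_⟩ <;> simp only [Pi.add_apply, Pi.smul_apply, smul_eq_mul]
    · linarith [cmb ha hb hab h1 g1]
    · linarith [cmb ha hb hab h2 g2]
    · linarith [cmb ha hb hab h3 g3]
    · linarith [cmb ha hb hab h4 g4]
  · exact isOpen_lt continuous_const (continuous_apply 2)
  · intro u h1 v g1 a b ha hb hab
    have h1' : 1 < u 2 := (Uo_mem u).2.2.2.mp h1
    have g1' : 1 < v 2 := (Uo_mem v).2.2.2.mp g1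
    refine (Uo_mem _).2.2.2.mpr ?_
    simp only [Pi.add_apply, Pi.smul_apply, smul_eq_mul]
    linarith [cmb ha hb hab h1' g1']

/-- `𝒮₃` has a closed convex realization in ℝ² and an open convex
realization in ℝ³. -/
theorem S3_closed_dim2_open_dim3 :
    (∃ X : Fin 4 → Set (Fin 2 → ℝ),
      (∀ i, IsClosed (X i) ∧ Convex ℝ (X i)) ∧ code X = S3) ∧
    (∃ U : Fin 4 → Set (Fin 3 → ℝ),
      (∀ i, IsOpen (U i) ∧ Convex ℝ (U i)) ∧ code U = S3) :=
  ⟨⟨Xc, Xc_closed_convex, code_Xc⟩, ⟨Uo, Uo_open_convex, code_Uo⟩⟩
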